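/- Let n ≥ 3 and let F be an arbitrary field. Then the F-vector space of inner derivations of the dihedral group algebra F D_{2n} has dimension 3⌊(n−1)/2⌋ over F. -/

import Mathlib

open MonoidAlgebra

/-- The `F`-linear map sending `β ∈ FG` to the inner derivation
`d_β : α ↦ α * β - β * α` of the group algebra `FG`. -/
noncomputable def innerDerivMap (F G : Type*) [Field F] [Group G] :
    MonoidAlgebra F G →ₗ[F] Module.End F (MonoidAlgebra F G) where
  toFun β :=
    { toFun := fun α => α * β - β * α
      map_add' := by intro x y; noncomm_ring
      map_smul' := by intro c x; simp [smul_mul_assoc, mul_smul_comm, smul_sub] }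
  map_add' := by
    intro β γ; refine LinearMap.ext fun α => ?_
    simp only [LinearMap.coe_mk, AddHom.coe_mk, LinearMap.add_apply]
    noncomm_ring
  map_smul' := by
    intro c β; refine LinearMap.ext fun α => ?_
    simp [smul_mul_assoc, mul_smul_comm, smul_sub]

open DihedralGroup
lemma mem_ker_innerDerivMap_iff {F G : Type*} [Field F] [Group G] (β : MonoidAlgebra F G) :
    β ∈ LinearMap.ker (innerDerivMap F G) ↔ ∀ g x : G, β.coeff (g⁻¹ * x * g) = β.coeff x := by
  constructor
  · intro h g x
    have h0 : innerDerivMap F G β = 0 := LinearMap.mem_ker.mp h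
    have h1 : single g (1 : F) * β - β * single g 1 = 0 :=
      LinearMap.congr_fun h0 (single g 1)
    have h2 : single g (1 : F) * β = β * single g 1 := sub_eq_zero.mp h1
    have h3 : (1 : F) * β.coeff (g⁻¹ * (x * g)) = β.coeff ((x * g) * g⁻¹) * 1 := by
      rw [← single_mul_apply, ← mul_single_apply, h2]
    simpa [mul_assoc] using h3
  · intro h
    rw [LinearMap.mem_ker]
    refine LinearMap.ext fun α => ?_
    have key : ∀ a : G, ∀ b : F, single a b * β = β * single a b := by
      intro a b
      ext x
      rw [single_mul_apply, mul_single_apply, mul_comm]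
      congr 1
      have := h a (x * a⁻¹)
      simpa [mul_assoc] using this
    have hmul : α * β = β * α := by
      have : (LinearMap.mulRight F β : MonoidAlgebra F G →ₗ[F] MonoidAlgebra F G)
          = LinearMap.mulLeft F β := by
        refine MonoidAlgebra.lhom_ext' fun a => LinearMap.ext fun b => ?_
        simpa using key a b
      simpa using LinearMap.congr_fun this α
    show α * β - β * α = 0
    rw [hmul, sub_self]

lemma finrank_ker_innerDerivMap (F : Type*) [Field F] (G : Type*) [Group G] [Finite G] :
    Module.finrank F (LinearMap.ker (innerDerivMap F G)) = Nat.card (ConjClasses G) := by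
  haveI : Fintype G := Fintype.ofFinite G
  haveI : Fintype (ConjClasses G) := Fintype.ofFinite _
  have e : (ConjClasses G → F) ≃ₗ[F] LinearMap.ker (innerDerivMap F G) :=
    { toFun := fun f => ⟨ofCoeff (Finsupp.equivFunOnFinite.symm (fun g => f (ConjClasses.mk g))), by
        rw [mem_ker_innerDerivMap_iff]
        intro g x
        show f (ConjClasses.mk (g⁻¹ * x * g)) = f (ConjClasses.mk x)
        congr 1
        rw [ConjClasses.mk_eq_mk_iff_isConj, isConj_iff]
        exact ⟨g, by group⟩⟩
      map_add' := by
        intro f₁ f₂; apply Subtype.ext; ext x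
        simp [Finsupp.equivFunOnFinite]
        rfl
      map_smul' := by
        intro c f; apply Subtype.ext; ext x
        simp [Finsupp.equivFunOnFinite]
        exact Or.inl rfl
      invFun := fun βp c => Quotient.liftOn c (fun g => (βp : MonoidAlgebra F G).coeff g) (by
        intro a b hab
        obtain ⟨u, hu⟩ := isConj_iff.mp hab
        have h2 := (mem_ker_innerDerivMap_iff (βp : MonoidAlgebra F G)).mp βp.2 u⁻¹ a
        simp only [inv_inv] at h2
        rw [← hu]; exact h2.symm)
      left_inv := by
        intro f; funext c
        refine Quotient.inductionOn c fun g => ?_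
        show (Finsupp.equivFunOnFinite.symm (fun g => f (ConjClasses.mk g)) : G →₀ F) g
            = f (Quotient.mk _ g)
        simp [Finsupp.equivFunOnFinite]
        rfl
      right_inv := by
        intro βp; apply Subtype.ext; ext x
        show (βp : MonoidAlgebra F G).coeff x
            = (Finsupp.equivFunOnFinite.symm (fun g => (βp : MonoidAlgebra F G).coeff g) : G →₀ F) x
        simp [Finsupp.equivFunOnFinite] }
  rw [← LinearEquiv.finrank_eq e, Module.finrank_pi, Nat.card_eq_fintype_card]

noncomputable def maEquivFun (F G : Type*) [Field F] [Group G] [Finite G] :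
    MonoidAlgebra F G ≃ₗ[F] (G → F) := by
  haveI : Fintype G := Fintype.ofFinite G
  exact (MonoidAlgebra.coeffLinearEquiv F).trans (Finsupp.linearEquivFunOnFinite F F G)

instance (F G : Type*) [Field F] [Group G] [Finite G] :
    FiniteDimensional F (MonoidAlgebra F G) :=
  (maEquivFun F G).symm.finiteDimensional

lemma finrank_monoidAlgebra (F G : Type*) [Field F] [Group G] [Finite G] :
    Module.finrank F (MonoidAlgebra F G) = Nat.card G := by
  haveI : Fintype G := Fintype.ofFinite G
  rw [(maEquivFun F G).finrank_eq, Module.finrank_pi, Nat.card_eq_fintype_card]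


/-- Commuting pairs in the dihedral group, valid for all `n`. -/
def dihedralCommuteEquiv (n : ℕ) :
    { p : DihedralGroup n × DihedralGroup n // Commute p.1 p.2 } ≃
      ZMod n × {x : ZMod n // x + x = 0} ⊕ ZMod n × {x : ZMod n // x + x = 0} ⊕
      ZMod n × {x : ZMod n // x + x = 0} ⊕ ZMod n × ZMod n where
  toFun := fun
    | ⟨⟨r i, r j⟩, _⟩ => Sum.inr (Sum.inr (Sum.inr ⟨i, j⟩))
    | ⟨⟨r i, sr j⟩, h⟩ => Sum.inr (Sum.inl ⟨j, i, by
        have := h.eq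
        rw [r_mul_sr, sr_mul_r] at this
        have h2 := sr.inj this
        linear_combination -h2⟩)
    | ⟨⟨sr i, r j⟩, h⟩ => Sum.inl ⟨i, j, by
        have := h.eq
        rw [sr_mul_r, r_mul_sr] at this
        have h2 := sr.inj this
        linear_combination h2⟩
    | ⟨⟨sr i, sr j⟩, h⟩ => Sum.inr (Sum.inr (Sum.inl ⟨i, j - i, by
        have := h.eq
        rw [sr_mul_sr, sr_mul_sr] at this
        have h2 := r.inj this
        linear_combination h2⟩))
  invFun := fun
    | Sum.inl ⟨i, j, hj⟩ => ⟨⟨sr i, r j⟩, by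
        show sr i * r j = r j * sr i
        rw [sr_mul_r, r_mul_sr]
        congr 1; linear_combination hj⟩
    | Sum.inr (Sum.inl ⟨j, i, hi⟩) => ⟨⟨r i, sr j⟩, by
        show r i * sr j = sr j * r i
        rw [r_mul_sr, sr_mul_r]
        congr 1; linear_combination -hi⟩
    | Sum.inr (Sum.inr (Sum.inl ⟨i, k, hk⟩)) => ⟨⟨sr i, sr (i + k)⟩, by
        show sr i * sr (i + k) = sr (i + k) * sr i
        rw [sr_mul_sr, sr_mul_sr]
        congr 1; linear_combination hk⟩
    | Sum.inr (Sum.inr (Sum.inr ⟨i, j⟩)) => ⟨⟨r i, r j⟩, by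
        show r i * r j = r j * r i
        rw [r_mul_r, r_mul_r, add_comm]⟩
  left_inv := fun
    | ⟨⟨r i, r j⟩, _⟩ => rfl
    | ⟨⟨r i, sr j⟩, h⟩ => rfl
    | ⟨⟨sr i, r j⟩, h⟩ => rfl
    | ⟨⟨sr i, sr j⟩, h⟩ => by
        apply Subtype.ext
        show (sr i, sr (i + (j - i))) = (sr i, sr j)
        rw [add_sub_cancel]
  right_inv := fun
    | Sum.inl ⟨i, j, hj⟩ => rfl
    | Sum.inr (Sum.inl ⟨j, i, hi⟩) => rfl
    | Sum.inr (Sum.inr (Sum.inl ⟨i, k, hk⟩)) => by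
        simp only [add_sub_cancel_left]
    | Sum.inr (Sum.inr (Sum.inr ⟨i, j⟩)) => rfl


lemma card_two_torsion_odd {n : ℕ} (hn : Odd n) :
    Nat.card {x : ZMod n // x + x = 0} = 1 := by
  haveI : Unique {x : ZMod n // x + x = 0} :=
    { default := ⟨0, by simp⟩
      uniq := fun x => Subtype.ext ((ZMod.add_self_eq_zero_iff_eq_zero hn).mp x.2) }
  exact Nat.card_unique

lemma card_two_torsion_even {n : ℕ} (hn : 0 < n) (he : Even n) :
    Nat.card {x : ZMod n // x + x = 0} = 2 := by
  obtain ⟨m, rfl⟩ := he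
  have hm : 0 < m := by omega
  haveI : NeZero (m + m) := ⟨by omega⟩
  have key : ∀ x : ZMod (m + m), x + x = 0 ↔ x = 0 ∨ x = (m : ZMod (m + m)) := by
    intro x
    constructor
    · intro hx
      have hv : (x.val + x.val) % (m + m) = 0 := by
        have := congrArg ZMod.val hx
        rwa [ZMod.val_add, ZMod.val_zero] at this
      have hlt : x.val < m + m := x.val_lt
      obtain ⟨k, hk⟩ := Nat.dvd_of_mod_eq_zero hv
      have hcases : x.val = 0 ∨ x.val = m := by
        rcases Nat.lt_or_ge k 2 with h2 | h2
        · interval_cases k <;> omega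
        · nlinarith
      rcases hcases with h | h
      · left
        rw [← ZMod.natCast_zmod_val x, h, Nat.cast_zero]
      · right
        rw [← ZMod.natCast_zmod_val x, h]
    · rintro (rfl | rfl)
      · simp
      · rw [← Nat.cast_add, ZMod.natCast_self]
  have e : {x : ZMod (m + m) // x + x = 0} ≃ ({0, (m : ZMod (m + m))} : Set (ZMod (m + m))) :=
    Equiv.subtypeEquivRight (by intro x; rw [key x]; simp)
  rw [Nat.card_congr e, Nat.card_coe_set_eq, Set.ncard_pair]
  intro h
  have : (m : ZMod (m + m)) = 0 := h.symm
  rw [ZMod.natCast_eq_zero_iff] at this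
  have := Nat.le_of_dvd hm this
  omega



/-- For any field `F`, the space of inner derivations of the dihedral group
algebra `F D_{2n}` has dimension `3⌊(n-1)/2⌋`. -/
theorem finrank_innerDerivations_dihedral (F : Type*) [Field F] (n : ℕ) (hn : 3 ≤ n) :
    Module.finrank F (LinearMap.range (innerDerivMap F (DihedralGroup n))) =
      3 * ((n - 1) / 2) := by
  haveI : NeZero n := ⟨by omega⟩
  have hrn := LinearMap.finrank_range_add_finrank_ker (innerDerivMap F (DihedralGroup n))
  rw [finrank_ker_innerDerivMap, finrank_monoidAlgebra, DihedralGroup.nat_card] at hrn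
  set t := Nat.card {x : ZMod n // x + x = 0} with ht
  have hcomm : Nat.card {p : DihedralGroup n × DihedralGroup n // Commute p.1 p.2}
      = n * t + (n * t + (n * t + n * n)) := by
    rw [Nat.card_congr (dihedralCommuteEquiv n)]
    simp only [Nat.card_sum, Nat.card_prod, Nat.card_zmod]
    rfl
  have hc := card_comm_eq_card_conjClasses_mul_card (DihedralGroup n)
  rw [hcomm, DihedralGroup.nat_card] at hc
  have hclass2 : Nat.card (ConjClasses (DihedralGroup n)) * 2 = 3 * t + n :=
    Nat.eq_of_mul_eq_mul_right (show 0 < n by omega) (by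
      calc Nat.card (ConjClasses (DihedralGroup n)) * 2 * n
          = Nat.card (ConjClasses (DihedralGroup n)) * (2 * n) := by ring
        _ = n * t + (n * t + (n * t + n * n)) := hc.symm
        _ = (3 * t + n) * n := by ring)
  rcases Nat.even_or_odd n with he | ho
  · rw [ht, card_two_torsion_even (by omega) he] at hclass2
    have hpar : n % 2 = 0 := Nat.even_iff.mp he
    omega
  · rw [ht, card_two_torsion_odd ho] at hclass2
    have hpar : n % 2 = 1 := Nat.odd_iff.mp ho
    omega
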